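/- Let V₁, …, V_k be real Hilbert spaces, and for each ℓ let v_ℓ and u¹_ℓ, …, u^m_ℓ be unit vectors in V_ℓ with |⟨u^i_ℓ, u^j_ℓ⟩| ≤ 1/m² whenever i ≠ j. Then there exists i ≤ m such that |⟨v_ℓ, u^i_ℓ⟩| ≤ √(2k/m) for all ℓ ≤ k. -/

import Mathlib

open Finset in
lemma stmt15_key {V : Type*} [NormedAddCommGroup V] [InnerProductSpace ℝ V]
    (m : ℕ) (hm : 0 < m) (v : V) (u : Fin m → V) (hv : ‖v‖ = 1)
    (hu : ∀ i, ‖u i‖ = 1)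
    (horth : ∀ i j, i ≠ j → |(inner ℝ (u i) (u j) : ℝ)| ≤ 1 / (m : ℝ) ^ 2) :
    ∑ i, (inner ℝ v (u i) : ℝ) ^ 2 ≤ 2 := by
  set c : Fin m → ℝ := fun i => (inner ℝ v (u i) : ℝ) with hc
  have hc1 : ∀ i, |c i| ≤ 1 := fun i => by
    have := abs_real_inner_le_norm v (u i)
    simpa [hc, hv, hu i] using this
  set w : V := ∑ i, c i • u i with hw
  have h0 : (0:ℝ) ≤ ‖v - w‖ ^ 2 := sq_nonneg _
  have hvw : (inner ℝ v w : ℝ) = ∑ i, (c i) ^ 2 := by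
    simp [hw, inner_sum, real_inner_smul_right, sq, hc, mul_comm]
  have hww : ‖w‖ ^ 2 = ∑ i, ∑ j, c i * c j * (inner ℝ (u i) (u j) : ℝ) := by
    rw [← real_inner_self_eq_norm_sq]
    simp only [hw, inner_sum, sum_inner, real_inner_smul_left,
      real_inner_smul_right, mul_assoc]
    exact Finset.sum_congr rfl fun i _ => Finset.sum_congr rfl fun j _ => by
      rw [real_inner_comm]
  have hexp : ‖v - w‖ ^ 2 = 1 - 2 * ∑ i, (c i) ^ 2
      + ∑ i, ∑ j, c i * c j * (inner ℝ (u i) (u j) : ℝ) := by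
    rw [norm_sub_sq_real, hvw, hww, hv]; ring
  have hQ : ∑ i, ∑ j, c i * c j * (inner ℝ (u i) (u j) : ℝ)
      ≤ ∑ i, (c i) ^ 2 + 1 := by
    have hterm : ∀ i j, c i * c j * (inner ℝ (u i) (u j) : ℝ)
        ≤ (if i = j then (c i) ^ 2 else 0) + 1 / (m : ℝ) ^ 2 := by
      intro i j
      by_cases h : i = j
      · subst h
        have : (inner ℝ (u i) (u i) : ℝ) = 1 := by
          rw [real_inner_self_eq_norm_sq, hu i]; norm_num
        rw [if_pos rfl, this, mul_one, ← sq]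
        exact le_add_of_nonneg_right (by positivity)
      · simp only [if_neg h, zero_add]
        calc c i * c j * (inner ℝ (u i) (u j) : ℝ)
            ≤ |c i * c j * (inner ℝ (u i) (u j) : ℝ)| := le_abs_self _
          _ = |c i| * |c j| * |(inner ℝ (u i) (u j) : ℝ)| := by
              rw [abs_mul, abs_mul]
          _ ≤ 1 * 1 * (1 / (m : ℝ) ^ 2) :=
              mul_le_mul (mul_le_mul (hc1 i) (hc1 j) (abs_nonneg _) zero_le_one)
                (horth i j h) (abs_nonneg _) (by norm_num)
          _ = 1 / (m : ℝ) ^ 2 := by ring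
    calc ∑ i, ∑ j, c i * c j * (inner ℝ (u i) (u j) : ℝ)
        ≤ ∑ i, ∑ j, ((if i = j then (c i) ^ 2 else 0) + 1 / (m : ℝ) ^ 2) := by
          gcongr with i _ j _; exact hterm i j
      _ = ∑ i, (c i) ^ 2 + m * (m * (1 / (m : ℝ) ^ 2)) := by
          simp [Finset.sum_add_distrib, Finset.sum_ite_eq', mul_comm]
      _ = ∑ i, (c i) ^ 2 + 1 := by
          have : (m : ℝ) ≠ 0 := Nat.cast_ne_zero.mpr hm.ne'
          field_simp
  nlinarith [hexp, h0, hQ]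

/-- Let `V₁, …, V_k` be real Hilbert spaces and, for each `ℓ`, let
`v_ℓ` and `u¹_ℓ, …, u^m_ℓ` be unit vectors in `V_ℓ` with `|⟨uⁱ_ℓ, uʲ_ℓ⟩| ≤ 1/m²`
whenever `i ≠ j`.  Then there is some `i ≤ m` with `|⟨v_ℓ, uⁱ_ℓ⟩| ≤ √(2k/m)` for
all `ℓ ≤ k`. -/
theorem stmt15 (k m : ℕ) (hm : 0 < m) (V : Fin k → Type*)
    [∀ ℓ, NormedAddCommGroup (V ℓ)] [∀ ℓ, InnerProductSpace ℝ (V ℓ)]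
    (v : ∀ ℓ, V ℓ) (u : ∀ ℓ, Fin m → V ℓ)
    (hv : ∀ ℓ, ‖v ℓ‖ = 1) (hu : ∀ ℓ i, ‖u ℓ i‖ = 1)
    (horth : ∀ ℓ, ∀ i j, i ≠ j → |(inner ℝ (u ℓ i) (u ℓ j) : ℝ)| ≤ 1 / (m : ℝ) ^ 2) :
    ∃ i : Fin m, ∀ ℓ, |(inner ℝ (v ℓ) (u ℓ i) : ℝ)| ≤ Real.sqrt (2 * k / m) := by
  have hmR : (0:ℝ) < m := Nat.cast_pos.mpr hm
  -- total sum bound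
  have htot : ∑ i : Fin m, ∑ ℓ : Fin k, (inner ℝ (v ℓ) (u ℓ i) : ℝ) ^ 2
      ≤ 2 * k := by
    rw [Finset.sum_comm]
    calc ∑ ℓ : Fin k, ∑ i : Fin m, (inner ℝ (v ℓ) (u ℓ i) : ℝ) ^ 2
        ≤ ∑ _ℓ : Fin k, (2:ℝ) := by
          apply Finset.sum_le_sum
          intro ℓ _
          exact stmt15_key m hm (v ℓ) (u ℓ) (hv ℓ) (hu ℓ) (horth ℓ)
      _ = 2 * k := by simp [mul_comm]
  -- pigeonhole: some column has sum ≤ 2k/m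
  have hne : (Finset.univ : Finset (Fin m)).Nonempty := by
    simpa [Finset.univ_nonempty_iff] using Fin.pos_iff_nonempty.mp hm
  obtain ⟨i, -, hi⟩ := Finset.exists_le_of_sum_le hne
    (show ∑ i : Fin m, ∑ ℓ : Fin k, (inner ℝ (v ℓ) (u ℓ i) : ℝ) ^ 2
        ≤ ∑ _i : Fin m, (2 * k / m : ℝ) by
      have hcast : (m:ℝ) * (2 * (k:ℝ) / m) = 2 * k := by field_simp
      rw [Finset.sum_const, Finset.card_univ, Fintype.card_fin, nsmul_eq_mul,
        hcast]
      exact htot)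
  refine ⟨i, fun ℓ => ?_⟩
  have hsq : (inner ℝ (v ℓ) (u ℓ i) : ℝ) ^ 2 ≤ 2 * k / m := by
    refine le_trans ?_ hi
    exact Finset.single_le_sum
      (f := fun ℓ => (inner ℝ (v ℓ) (u ℓ i) : ℝ) ^ 2)
      (fun ℓ _ => sq_nonneg _) (Finset.mem_univ ℓ)
  calc |(inner ℝ (v ℓ) (u ℓ i) : ℝ)|
      = Real.sqrt ((inner ℝ (v ℓ) (u ℓ i) : ℝ) ^ 2) := (Real.sqrt_sq_eq_abs _).symm
    _ ≤ Real.sqrt (2 * k / m) := Real.sqrt_le_sqrt hsq
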